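/- Vertex identity (Section 3.2): Θ2±(θ1⁻) = (θ2⁺ + θ2⁻)/2 − ((θ2⁺ − θ2⁻)/2)·cos β, the identity used to prove w(Θ2±(θ1⁻)) = −1. Assume σ11 > 0, σ22 > 0, detΣ := σ11σ22 − σ12² > 0, μ1 < 0, μ2 < 0, and let cos β = −σ12/√(σ11σ22). Then −(σ12·θ1⁻ + μ2)/σ22 = (θ2⁺ + θ2⁻)/2 − ((θ2⁺ − θ2⁻)/2)·cos β; explicitly, −(σ12·θ1⁻ + μ2)/σ22 = (μ1σ12 − μ2σ11)/detΣ + σ12·√((μ1σ12 − μ2σ11)² + μ1²·detΣ)/(√(σ11σ22)·detΣ). -/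

import Mathlib

/-- Vertex identity (Section 3.2): Θ2±(θ1⁻) = (θ2⁺+θ2⁻)/2 − ((θ2⁺−θ2⁻)/2)·cos β. -/
theorem stmt14 (σ11 σ22 σ12 μ1 μ2 : ℝ)
    (hσ11 : 0 < σ11) (hσ22 : 0 < σ22) (hdet : 0 < σ11 * σ22 - σ12 ^ 2)
    (hμ1 : μ1 < 0) (hμ2 : μ2 < 0)
    (θ1m θ2p θ2m cosβ : ℝ)
    (hθ1m : θ1m = ((μ2 * σ12 - μ1 * σ22)
      - Real.sqrt ((μ2 * σ12 - μ1 * σ22) ^ 2 + μ2 ^ 2 * (σ11 * σ22 - σ12 ^ 2)))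
      / (σ11 * σ22 - σ12 ^ 2))
    (hθ2p : θ2p = ((μ1 * σ12 - μ2 * σ11)
      + Real.sqrt ((μ1 * σ12 - μ2 * σ11) ^ 2 + μ1 ^ 2 * (σ11 * σ22 - σ12 ^ 2)))
      / (σ11 * σ22 - σ12 ^ 2))
    (hθ2m : θ2m = ((μ1 * σ12 - μ2 * σ11)
      - Real.sqrt ((μ1 * σ12 - μ2 * σ11) ^ 2 + μ1 ^ 2 * (σ11 * σ22 - σ12 ^ 2)))
      / (σ11 * σ22 - σ12 ^ 2))
    (hcosβ : cosβ = -σ12 / Real.sqrt (σ11 * σ22)) :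
    -(σ12 * θ1m + μ2) / σ22 = (θ2p + θ2m) / 2 - ((θ2p - θ2m) / 2) * cosβ ∧
    -(σ12 * θ1m + μ2) / σ22 = (μ1 * σ12 - μ2 * σ11) / (σ11 * σ22 - σ12 ^ 2)
      + σ12 * Real.sqrt ((μ1 * σ12 - μ2 * σ11) ^ 2 + μ1 ^ 2 * (σ11 * σ22 - σ12 ^ 2))
        / (Real.sqrt (σ11 * σ22) * (σ11 * σ22 - σ12 ^ 2)) := by
  subst hθ1m hθ2p hθ2m hcosβ
  set Q : ℝ := μ1 ^ 2 * σ22 - 2 * μ1 * μ2 * σ12 + μ2 ^ 2 * σ11 with hQdef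
  have hQ : 0 ≤ Q := by nlinarith [sq_nonneg (μ1 * σ22 - μ2 * σ12), sq_nonneg μ2]
  have h1 : Real.sqrt ((μ2 * σ12 - μ1 * σ22) ^ 2 + μ2 ^ 2 * (σ11 * σ22 - σ12 ^ 2))
      = Real.sqrt σ22 * Real.sqrt Q := by
    rw [show (μ2 * σ12 - μ1 * σ22) ^ 2 + μ2 ^ 2 * (σ11 * σ22 - σ12 ^ 2) = σ22 * Q by
      rw [hQdef]; ring, Real.sqrt_mul hσ22.le]
  have h2 : Real.sqrt ((μ1 * σ12 - μ2 * σ11) ^ 2 + μ1 ^ 2 * (σ11 * σ22 - σ12 ^ 2))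
      = Real.sqrt σ11 * Real.sqrt Q := by
    rw [show (μ1 * σ12 - μ2 * σ11) ^ 2 + μ1 ^ 2 * (σ11 * σ22 - σ12 ^ 2) = σ11 * Q by
      rw [hQdef]; ring, Real.sqrt_mul hσ11.le]
  have h3 : Real.sqrt (σ11 * σ22) = Real.sqrt σ11 * Real.sqrt σ22 :=
    Real.sqrt_mul hσ11.le _
  have hDne : σ11 * σ22 - σ12 ^ 2 ≠ 0 := ne_of_gt hdet
  rw [h1, h2, h3]
  obtain ⟨a, hap, ha⟩ : ∃ a, 0 < a ∧ σ11 = a ^ 2 :=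
    ⟨Real.sqrt σ11, Real.sqrt_pos.mpr hσ11, (Real.sq_sqrt hσ11.le).symm⟩
  obtain ⟨b, hbp, hb⟩ : ∃ b, 0 < b ∧ σ22 = b ^ 2 :=
    ⟨Real.sqrt σ22, Real.sqrt_pos.mpr hσ22, (Real.sq_sqrt hσ22.le).symm⟩
  subst ha hb
  rw [Real.sqrt_sq hap.le, Real.sqrt_sq hbp.le]
  constructor <;>
  · field_simp [show b ^ 2 * a ^ 2 - σ12 ^ 2 ≠ 0 by rw [mul_comm]; exact hDne]
    ring
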